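/- Let q be an odd prime, V = F_q⁴ with hyperbolic form Q(x) = x₁x₂ + x₃x₄. Define v_∞ = e₄, v_α = e₂ + αe₄ for α ∈ F_q, u_∞ = e₁, u_α = αe₁ − e₃, and U_α = span{v_α, u_α} for α ∈ F_q ∪ {∞}. Then the q+1 two-dimensional subspaces U_α are pairwise trivially intersecting, each U_α ∖ {0} consists entirely of vectors x with Q(x) = 0, and ⋃_α (U_α ∖ {0}) equals {x ∈ V : x ≠ 0, Q(x) = 0}. -/

import Mathlib

open Finset

/-- The hyperbolic quadratic form `Q(x) = x₁x₂ + x₃x₄` on `F_q⁴`. -/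
def Q4 (q : ℕ) (x : Fin 4 → ZMod q) : ZMod q := x 0 * x 1 + x 2 * x 3

/-- The vectors `v_α` (`α ∈ F_q ∪ {∞}`, with `none` playing the role of `∞`):
`v_∞ = e₄` and `v_α = e₂ + αe₄`. -/
def vvec (q : ℕ) : Option (ZMod q) → (Fin 4 → ZMod q)
  | none => ![0, 0, 0, 1]
  | some a => ![0, 1, 0, a]

/-- The vectors `u_α`: `u_∞ = e₁` and `u_α = αe₁ − e₃`. -/
def uvec (q : ℕ) : Option (ZMod q) → (Fin 4 → ZMod q)
  | none => ![1, 0, 0, 0]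
  | some a => ![a, 0, -1, 0]

/-- The subspace `U_α = span{v_α, u_α}` of `F_q⁴`. -/
def Usub (q : ℕ) [Fact q.Prime] (α : Option (ZMod q)) :
    Submodule (ZMod q) (Fin 4 → ZMod q) :=
  Submodule.span (ZMod q) {vvec q α, uvec q α}

/-- the `q+1` two-dimensional subspaces `U_α` pairwise intersect trivially,
consist of singular vectors of `Q(x) = x₁x₂ + x₃x₄`, and their nonzero vectors partition the
set of nonzero singular vectors. -/
lemma mem_Usub_none (q : ℕ) [Fact q.Prime] (x : Fin 4 → ZMod q) :
    x ∈ Usub q none ↔ x 1 = 0 ∧ x 2 = 0 := by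
  rw [Usub, Submodule.mem_span_pair]
  constructor
  · rintro ⟨c, d, rfl⟩
    simp [vvec, uvec]
  · rintro ⟨h1, h2⟩
    refine ⟨x 3, x 0, ?_⟩
    funext i
    fin_cases i <;> simp [vvec, uvec, h1, h2]

lemma mem_Usub_some (q : ℕ) [Fact q.Prime] (a : ZMod q) (x : Fin 4 → ZMod q) :
    x ∈ Usub q (some a) ↔ x 0 = -(a * x 2) ∧ x 3 = a * x 1 := by
  rw [Usub, Submodule.mem_span_pair]
  constructor
  · rintro ⟨c, d, rfl⟩
    constructor <;> simp [vvec, uvec] <;> ring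
  · rintro ⟨h1, h2⟩
    refine ⟨x 1, -x 2, ?_⟩
    funext i
    fin_cases i <;> simp [vvec, uvec, h1, h2] <;> ring

lemma li_Usub (q : ℕ) [Fact q.Prime] (α : Option (ZMod q)) :
    LinearIndependent (ZMod q) ![vvec q α, uvec q α] := by
  rw [LinearIndependent.pair_iff]
  intro s t hst
  cases α with
  | none =>
    have h0 := congrFun hst 0
    have h3 := congrFun hst 3
    simp [vvec, uvec] at h0 h3
    exact ⟨h3, h0⟩
  | some a =>
    have h1 := congrFun hst 1
    have h2 := congrFun hst 2
    simp [vvec, uvec] at h1 h2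
    exact ⟨h1, h2⟩

lemma finrank_Usub (q : ℕ) [Fact q.Prime] (α : Option (ZMod q)) :
    Module.finrank (ZMod q) (Usub q α) = 2 := by
  have hr : Set.range ![vvec q α, uvec q α] = {vvec q α, uvec q α} := by
    simp [Matrix.range_cons, Matrix.range_empty, Set.pair_comm]
  have := finrank_span_eq_card (li_Usub q α)
  rw [hr] at this
  exact this.trans (by simp)

theorem stmt16 (q : ℕ) [Fact q.Prime] (hodd : Odd q) :
    (∀ α β : Option (ZMod q), α ≠ β → Usub q α ⊓ Usub q β = ⊥) ∧
    (∀ α : Option (ZMod q), Module.finrank (ZMod q) (Usub q α) = 2) ∧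
    (∀ α : Option (ZMod q), ∀ x ∈ Usub q α, x ≠ 0 → Q4 q x = 0) ∧
    (∀ x : Fin 4 → ZMod q, x ≠ 0 → (Q4 q x = 0 ↔ ∃ α, x ∈ Usub q α)) := by
  have hsing : ∀ (α : Option (ZMod q)) (x : Fin 4 → ZMod q), x ∈ Usub q α → Q4 q x = 0 := by
    intro α x hx
    cases α with
    | none =>
      rw [mem_Usub_none] at hx
      simp [Q4, hx.1, hx.2]
    | some a =>
      rw [mem_Usub_some] at hx
      rw [Q4, hx.1, hx.2]; ring
  refine ⟨?_, finrank_Usub q, fun α x hx _ => hsing α x hx, ?_⟩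
  · intro α β hne
    ext x
    simp only [Submodule.mem_inf, Submodule.mem_bot]
    constructor
    · rintro ⟨hα, hβ⟩
      match α, β with
      | none, none => exact absurd rfl hne
      | none, some b =>
        rw [mem_Usub_none] at hα
        rw [mem_Usub_some] at hβ
        funext i
        fin_cases i <;> simp [hα.1, hα.2, hβ.1, hβ.2]
      | some a, none =>
        rw [mem_Usub_none] at hβ
        rw [mem_Usub_some] at hα
        funext i
        fin_cases i <;> simp [hβ.1, hβ.2, hα.1, hα.2]
      | some a, some b =>
        rw [mem_Usub_some] at hα hβ
        have hab : a - b ≠ 0 := sub_ne_zero.2 (fun h => hne (by rw [h]))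
        have h2 : x 2 = 0 := by
          have : (a - b) * x 2 = 0 := by
            have := hα.1.symm.trans hβ.1
            linear_combination -this
          exact (mul_eq_zero.1 this).resolve_left hab
        have h1 : x 1 = 0 := by
          have : (a - b) * x 1 = 0 := by
            have := hα.2.symm.trans hβ.2
            linear_combination this
          exact (mul_eq_zero.1 this).resolve_left hab
        funext i
        fin_cases i <;> simp [hα.1, hα.2, h1, h2]
    · rintro rfl
      exact ⟨Submodule.zero_mem _, Submodule.zero_mem _⟩
  · intro x hx0
    refine ⟨fun hQ => ?_, fun ⟨α, hα⟩ => hsing α x hα⟩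
    by_cases h2 : x 2 = 0
    · by_cases h1 : x 1 = 0
      · exact ⟨none, (mem_Usub_none q x).2 ⟨h1, h2⟩⟩
      · refine ⟨some (x 3 / x 1), (mem_Usub_some q _ x).2 ⟨?_, ?_⟩⟩
        · have h0 : x 0 = 0 := by
            rw [Q4, h2] at hQ
            simpa [h1] using hQ
          simp [h0, h2]
        · rw [div_mul_cancel₀ _ h1]
    · refine ⟨some (-(x 0) / x 2), (mem_Usub_some q _ x).2 ⟨?_, ?_⟩⟩
      · field_simp
      · rw [Q4] at hQ
        rw [div_mul_eq_mul_div, eq_div_iff h2]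
        linear_combination hQ
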